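/- Let A₀, A₁ ∈ ℍ_ℂ and define the degree-one quaternionic polynomial A(z) = A₀ + z·A₁ for z ∈ ℂ (complex scalars being central in ℍ_ℂ). Let P₀ ∈ ℂ, θ ∈ ℝ, and r₁, r₂ > 0, let R = r₁ + 𝕚r₂, and let P₁ = P₀ + r₁e^{𝕚θ}, P₂ = P₀ + Re^{𝕚θ}, P₃ = P₀ + 𝕚r₂e^{𝕚θ} be the remaining vertices of the corresponding rectangle. Setting φ_ℓ = A(P_ℓ)·L·A(P_ℓ)^c for ℓ = 0, 1, 2, 3, the linear relation |R|²·φ₀ + R²·φ₁ − |R|²·φ₂ − R²·φ₃ = 0 holds, where |R|² = r₁² + r₂² acts as a complex scalar. -/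

import Mathlib

open Quaternion

/-- The complex quaternion `a + b i + c j + d k`. -/
noncomputable def mkQ (a b c d : ℂ) : Quaternion ℂ := ⟨a, b, c, d⟩

/-- The null quaternion `L = i + 𝕚 j ∈ ℍ_ℂ`. -/
noncomputable def Lq : Quaternion ℂ := mkQ 0 1 Complex.I 0


set_option maxHeartbeats 2000000 in
private lemma expandQ (A₀ A₁ : Quaternion ℂ) (z : ℂ) :
    (A₀ + z • A₁) * Lq * star (A₀ + z • A₁) =
      A₀ * Lq * star A₀ + z • (A₀ * Lq * star A₁ + A₁ * Lq * star A₀)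
        + (z ^ 2) • (A₁ * Lq * star A₁) := by
  ext <;> · simp [Quaternion.ext_iff, show Lq.re = 0 from rfl, show Lq.imI = 1 from rfl, show Lq.imJ = Complex.I from rfl, show Lq.imK = 0 from rfl]; ring

set_option maxHeartbeats 2000000 in
/-- The values `φ_ℓ = A(P_ℓ) L A(P_ℓ)^c` of a degree-one quaternionic
polynomial at the vertices of a rectangle satisfy the linear relation
`|R|² φ₀ + R² φ₁ − |R|² φ₂ − R² φ₃ = 0`. -/
theorem vertex_linear_relation (A₀ A₁ : Quaternion ℂ) (P₀ : ℂ) (θ r₁ r₂ : ℝ)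
    (hr₁ : 0 < r₁) (hr₂ : 0 < r₂)
    (R : ℂ) (hR : R = (r₁ : ℂ) + Complex.I * (r₂ : ℂ))
    (P₁ P₂ P₃ : ℂ)
    (hP₁ : P₁ = P₀ + (r₁ : ℂ) * Complex.exp (Complex.I * (θ : ℂ)))
    (hP₂ : P₂ = P₀ + R * Complex.exp (Complex.I * (θ : ℂ)))
    (hP₃ : P₃ = P₀ + Complex.I * (r₂ : ℂ) * Complex.exp (Complex.I * (θ : ℂ)))
    (A : ℂ → Quaternion ℂ) (hA : ∀ z : ℂ, A z = A₀ + z • A₁)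
    (φ₀ φ₁ φ₂ φ₃ : Quaternion ℂ)
    (hφ₀ : φ₀ = A P₀ * Lq * star (A P₀)) (hφ₁ : φ₁ = A P₁ * Lq * star (A P₁))
    (hφ₂ : φ₂ = A P₂ * Lq * star (A P₂)) (hφ₃ : φ₃ = A P₃ * Lq * star (A P₃)) :
    ((r₁ : ℂ) ^ 2 + (r₂ : ℂ) ^ 2) • φ₀ + R ^ 2 • φ₁ -
      ((r₁ : ℂ) ^ 2 + (r₂ : ℂ) ^ 2) • φ₂ - R ^ 2 • φ₃ = 0 := by

  subst hφ₀ hφ₁ hφ₂ hφ₃ hP₁ hP₂ hP₃ hR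
  simp only [hA, expandQ]
  match_scalars
  all_goals ring_nf
  all_goals simp only [show Complex.I ^ 3 = -Complex.I by rw [(by norm_num : 3 = 2 + 1), pow_succ, Complex.I_sq]; ring, Complex.I_pow_four, Complex.I_sq]
  all_goals ring_nf
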